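/- Let H be a simple bipartite graph on at least six vertices with color classes A and B satisfying |A| = |B|. Then the following statements are equivalent: (i) H is a brace; (ii) |N(S)| ≥ |S| + 2 for every nonempty subset S of A with |S| < |A| − 1; (iii) H − {a1, a2, b1, b2} has a perfect matching for any four distinct vertices with a1, a2 ∈ A and b1, b2 ∈ B. -/

import Mathlib

/-! Preamble: definitions for matching covered graphs, bricks, removable
doubletons, R-compatible/R-thin edges, retracts, ladders, partial biwheels,
R-configurations, and the eleven infinite families. -/

/-- The graph has a perfect matching. -/
def HasPerfMatching {V : Type*} (G : SimpleGraph V) : Prop :=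
  ∃ M : G.Subgraph, M.IsPerfectMatching

/-- A graph (with at least two vertices) is matching covered if it is connected
and each of its edges lies in some perfect matching. -/
def MatchingCovered {V : Type*} (G : SimpleGraph V) : Prop :=
  2 ≤ Nat.card V ∧ G.Connected ∧
    ∀ e ∈ G.edgeSet, ∃ M : G.Subgraph, M.IsPerfectMatching ∧ e ∈ M.edgeSet

/-- An edge of a matching covered graph is removable if deleting it leaves a
matching covered graph. -/
def RemovableEdge {V : Type*} (G : SimpleGraph V) (e : Sym2 V) : Prop :=
  e ∈ G.edgeSet ∧ MatchingCovered (G.deleteEdges {e})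

/-- The number of odd connected components. -/
noncomputable def oddCompCount {V : Type*} (G : SimpleGraph V) : ℕ :=
  Nat.card {c : G.ConnectedComponent // Odd (Nat.card c.supp)}

/-- `S` is a barrier of `G`: `S` is nonempty and the number of odd components
of `G − S` equals `|S|`. -/
def IsBarrierOf {V : Type*} (G : SimpleGraph V) (S : Set V) : Prop :=
  S.Nonempty ∧ oddCompCount (G.induce (Sᶜ : Set V)) = S.ncard

/-- Bicritical: at least four vertices, and deleting any two distinct vertices
leaves a graph with a perfect matching. -/
def BicriticalGraph {V : Type*} (G : SimpleGraph V) : Prop :=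
  4 ≤ Nat.card V ∧ ∀ u v : V, u ≠ v →
    HasPerfMatching (G.induce (({u, v} : Set V)ᶜ))

/-- 3-connected: at least four vertices, and deleting any set of at most two
vertices leaves a connected graph. -/
def ThreeConnectedGraph {V : Type*} (G : SimpleGraph V) : Prop :=
  4 ≤ Nat.card V ∧ ∀ S : Set V, S.ncard ≤ 2 → (G.induce (Sᶜ : Set V)).Connected

/-- A brick is a 3-connected bicritical graph. -/
def BrickGraph {V : Type*} (G : SimpleGraph V) : Prop :=
  ThreeConnectedGraph G ∧ BicriticalGraph G

/-- `A`, `B` form a bipartition of `G`. -/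
def BipartitionOf {V : Type*} (G : SimpleGraph V) (A B : Set V) : Prop :=
  A ∪ B = Set.univ ∧ Disjoint A B ∧ ∀ ⦃u v : V⦄, G.Adj u v → (u ∈ A ↔ v ∈ B)

/-- `G` is bipartite. -/
def BipartiteGraph {V : Type*} (G : SimpleGraph V) : Prop :=
  ∃ A B : Set V, BipartitionOf G A B

/-- `{α, β}` is a removable doubleton of `G`: a pair of distinct edges whose
deletion leaves a bipartite matching covered graph. -/
def RemovableDoubleton {V : Type*} (G : SimpleGraph V) (α β : Sym2 V) : Prop :=
  α ≠ β ∧ α ∈ G.edgeSet ∧ β ∈ G.edgeSet ∧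
    BipartiteGraph (G.deleteEdges {α, β}) ∧ MatchingCovered (G.deleteEdges {α, β})

/-- An `R`-brick: a brick with a fixed removable doubleton `R = {α, β}`. -/
def RBrick {V : Type*} (G : SimpleGraph V) (α β : Sym2 V) : Prop :=
  BrickGraph G ∧ RemovableDoubleton G α β

/-- `V(R)`: the set of the four ends of the doubleton edges. -/
def VR {V : Type*} (α β : Sym2 V) : Set V := {v | v ∈ α ∨ v ∈ β}

/-- `e` is `R`-compatible: it is an edge of `H := G − R` and is removable in
both `G` and `H`. -/
def RCompatible {V : Type*} (G : SimpleGraph V) (α β e : Sym2 V) : Prop :=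
  e ∈ (G.deleteEdges {α, β}).edgeSet ∧
    MatchingCovered (G.deleteEdges {e}) ∧
    MatchingCovered ((G.deleteEdges {α, β}).deleteEdges {e})

/-- `e` is `R`-thin: `R`-compatible, and every barrier of `G − e` has at most
two vertices. -/
def RThin {V : Type*} (G : SimpleGraph V) (α β e : Sym2 V) : Prop :=
  RCompatible G α β e ∧
    ∀ S : Set V, IsBarrierOf (G.deleteEdges {e}) S → S.ncard ≤ 2

/-- The number of maximal nontrivial barriers of a graph. -/
noncomputable def barrierIndex {V : Type*} (G : SimpleGraph V) : ℕ :=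
  Set.ncard {S : Set V | IsBarrierOf G S ∧ 2 ≤ S.ncard ∧
    ∀ T : Set V, IsBarrierOf G T → S ⊆ T → T = S}

/-- Degree of a vertex (as the cardinality of its neighbourhood). -/
noncomputable def degOf {V : Type*} (G : SimpleGraph V) (v : V) : ℕ :=
  (G.neighborSet v).ncard

/-- The relation identifying each degree-two vertex with its neighbours
(bicontraction of all degree-two vertices at once). -/
def bicontractPairRel {V : Type*} (G : SimpleGraph V) (u v : V) : Prop :=
  G.Adj u v ∧ (degOf G u = 2 ∨ degOf G v = 2)

/-- The vertex identifications performed when taking the retract. -/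
def retractSetoid {V : Type*} (G : SimpleGraph V) : Setoid V :=
  Relation.EqvGen.setoid (bicontractPairRel G)

/-- The retract of `G` (as a simple graph on the quotient). -/
def retractGraph {V : Type*} (G : SimpleGraph V) :
    SimpleGraph (Quotient (retractSetoid G)) where
  Adj X Y := X ≠ Y ∧ ∃ u v : V,
    Quotient.mk (retractSetoid G) u = X ∧ Quotient.mk (retractSetoid G) v = Y ∧ G.Adj u v
  symm := by
    constructor
    rintro X Y ⟨hne, u, v, hu, hv, huv⟩
    exact ⟨hne.symm, v, u, hv, hu, huv.symm⟩
  loopless := by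
    constructor
    rintro X ⟨hne, -⟩
    exact hne rfl

/-- The retract of `G` has a pair of parallel edges. -/
def retractHasParallel {V : Type*} (G : SimpleGraph V) : Prop :=
  ∃ p q p' q' : V, G.Adj p q ∧ G.Adj p' q' ∧ s(p, q) ≠ s(p', q') ∧
    ¬ Relation.EqvGen (bicontractPairRel G) p q ∧
    ((Relation.EqvGen (bicontractPairRel G) p p' ∧
        Relation.EqvGen (bicontractPairRel G) q q') ∨
     (Relation.EqvGen (bicontractPairRel G) p q' ∧
        Relation.EqvGen (bicontractPairRel G) q p'))

/-- `e` is strictly `R`-thin: `R`-thin and the retract of `G − e` has no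
parallel edges. -/
def StrictlyRThin {V : Type*} (G : SimpleGraph V) (α β e : Sym2 V) : Prop :=
  RThin G α β e ∧ ¬ retractHasParallel (G.deleteEdges {e})

/-- The ladder with `m` rungs: two paths `x₀…x_{m-1}` (first coordinate `0`)
and `y₀…y_{m-1}` (first coordinate `1`) together with the rungs `xᵢyᵢ`. -/
def ladderGraph (m : ℕ) : SimpleGraph (Fin 2 × Fin m) :=
  SimpleGraph.fromRel (fun p q =>
    (p.1 = q.1 ∧ p.2.val + 1 = q.2.val) ∨ (p.1 ≠ q.1 ∧ p.2 = q.2))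

/-- The partial biwheel on the odd path `x₀…x_{2k-1}` (the `inl` vertices)
with hubs `u = inr 0` (joined to the even-indexed path vertices) and
`w = inr 1` (joined to the odd-indexed path vertices). -/
def biwheelGraph (k : ℕ) : SimpleGraph (Fin (2 * k) ⊕ Fin 2) :=
  SimpleGraph.fromRel (fun p q =>
    match p, q with
    | Sum.inl i, Sum.inl j => i.val + 1 = j.val
    | Sum.inr h, Sum.inl i => (h = 0 ∧ i.val % 2 = 0) ∨ (h = 1 ∧ i.val % 2 = 1)
    | _, _ => False)

/-- The subgraph `K` of `Γ` is a ladder with `m` rungs and corners `a u b w`: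
`au` and `bw` are its external rungs, labelled according to the convention
that `a` and `w` lie in one colour class and `b` and `u` in the other. -/
def LadderOn {W : Type*} (Γ : SimpleGraph W) (K : Γ.Subgraph) (m : ℕ)
    (a u b w : W) : Prop :=
  ∃ (hm : 3 ≤ m) (φ : ladderGraph m ≃g K.coe),
    (φ ((0 : Fin 2), (⟨0, by omega⟩ : Fin m))).val = a ∧
    (φ ((1 : Fin 2), (⟨0, by omega⟩ : Fin m))).val = u ∧
    (if m % 2 = 1 then
        (φ ((0 : Fin 2), (⟨m - 1, by omega⟩ : Fin m))).val = w ∧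
        (φ ((1 : Fin 2), (⟨m - 1, by omega⟩ : Fin m))).val = b
      else
        (φ ((1 : Fin 2), (⟨m - 1, by omega⟩ : Fin m))).val = w ∧
        (φ ((0 : Fin 2), (⟨m - 1, by omega⟩ : Fin m))).val = b)

/-- The subgraph `K` of `Γ` is a partial biwheel (parameter `k`, order `2k+2`)
with ends `a`, `b` and hubs `u`, `w`; its external spokes are `au` and `bw`. -/
def BiwheelOn {W : Type*} (Γ : SimpleGraph W) (K : Γ.Subgraph) (k : ℕ)
    (a u b w : W) : Prop :=
  ∃ (hk : 2 ≤ k) (φ : biwheelGraph k ≃g K.coe),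
    (φ (Sum.inl (⟨0, by omega⟩ : Fin (2 * k)))).val = a ∧
    (φ (Sum.inl (⟨2 * k - 1, by omega⟩ : Fin (2 * k)))).val = b ∧
    (φ (Sum.inr 0)).val = u ∧
    (φ (Sum.inr 1)).val = w

/-- Truncated biwheel: a spanning partial biwheel plus the edges `aw`, `bu`. -/
def IsTruncatedBiwheel {V : Type*} (G : SimpleGraph V) : Prop :=
  ∃ (K : G.Subgraph) (k : ℕ) (a u b w : V),
    BiwheelOn G K k a u b w ∧ K.verts = Set.univ ∧
    G.edgeSet = K.edgeSet ∪ {s(a, w), s(b, u)}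

/-- Prism: a spanning odd ladder plus the edges `aw`, `bu`. -/
def IsPrism {V : Type*} (G : SimpleGraph V) : Prop :=
  ∃ (K : G.Subgraph) (m : ℕ) (a u b w : V),
    Odd m ∧ LadderOn G K m a u b w ∧ K.verts = Set.univ ∧
    G.edgeSet = K.edgeSet ∪ {s(a, w), s(b, u)}

/-- Möbius ladder: a spanning even ladder plus the edges `aw`, `bu`;
by convention `K₄` is also a Möbius ladder. -/
def IsMobiusLadder {V : Type*} (G : SimpleGraph V) : Prop :=
  (∃ (K : G.Subgraph) (m : ℕ) (a u b w : V),
    Even m ∧ LadderOn G K m a u b w ∧ K.verts = Set.univ ∧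
    G.edgeSet = K.edgeSet ∪ {s(a, w), s(b, u)}) ∨
  Nonempty (G ≃g (⊤ : SimpleGraph (Fin 4)))

/-- Staircase: a ladder plus two new vertices `a₂`, `b₂` and the five edges
`a a₂`, `u a₂`, `b b₂`, `w b₂`, `a₂ b₂`. -/
def IsStaircase {V : Type*} (G : SimpleGraph V) : Prop :=
  ∃ (K : G.Subgraph) (m : ℕ) (a u b w a2 b2 : V),
    LadderOn G K m a u b w ∧
    a2 ∉ K.verts ∧ b2 ∉ K.verts ∧ a2 ≠ b2 ∧
    K.verts ∪ {a2, b2} = Set.univ ∧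
    G.edgeSet = K.edgeSet ∪ {s(a, a2), s(u, a2), s(b, b2), s(w, b2), s(a2, b2)}

/-- Pseudo-biwheel: a partial biwheel of order at least eight plus two new
vertices `a₂`, `b₂` and the five edges `a a₂`, `u a₂`, `b b₂`, `w b₂`,
`a₂ b₂`. -/
def IsPseudoBiwheel {V : Type*} (G : SimpleGraph V) : Prop :=
  ∃ (K : G.Subgraph) (k : ℕ) (a u b w a2 b2 : V),
    3 ≤ k ∧ BiwheelOn G K k a u b w ∧
    a2 ∉ K.verts ∧ b2 ∉ K.verts ∧ a2 ≠ b2 ∧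
    K.verts ∪ {a2, b2} = Set.univ ∧
    G.edgeSet = K.edgeSet ∪ {s(a, a2), s(u, a2), s(b, b2), s(w, b2), s(a2, b2)}

/-- Double biwheel of type I: two partial biwheels sharing precisely their
hubs `u`, `w`, plus the edges `a₁a₂` and `b₁b₂`. -/
def IsDoubleBiwheelI {V : Type*} (G : SimpleGraph V) : Prop :=
  ∃ (K1 K2 : G.Subgraph) (k1 k2 : ℕ) (a1 b1 a2 b2 u w : V),
    BiwheelOn G K1 k1 a1 u b1 w ∧ BiwheelOn G K2 k2 a2 u b2 w ∧
    K1.verts ∩ K2.verts = {u, w} ∧ K1.verts ∪ K2.verts = Set.univ ∧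
    G.edgeSet = K1.edgeSet ∪ K2.edgeSet ∪ {s(a1, a2), s(b1, b2)}

/-- Double ladder of type I. -/
def IsDoubleLadderI {V : Type*} (G : SimpleGraph V) : Prop :=
  ∃ (K1 K2 : G.Subgraph) (m1 m2 : ℕ) (a1 b1 a2 b2 u w : V),
    LadderOn G K1 m1 a1 u b1 w ∧ LadderOn G K2 m2 a2 u b2 w ∧
    K1.verts ∩ K2.verts = {u, w} ∧ K1.verts ∪ K2.verts = Set.univ ∧
    G.edgeSet = K1.edgeSet ∪ K2.edgeSet ∪ {s(a1, a2), s(b1, b2)}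

/-- Laddered biwheel of type I. -/
def IsLadderedBiwheelI {V : Type*} (G : SimpleGraph V) : Prop :=
  ∃ (K1 K2 : G.Subgraph) (k1 m2 : ℕ) (a1 b1 a2 b2 u w : V),
    BiwheelOn G K1 k1 a1 u b1 w ∧ LadderOn G K2 m2 a2 u b2 w ∧
    K1.verts ∩ K2.verts = {u, w} ∧ K1.verts ∪ K2.verts = Set.univ ∧
    G.edgeSet = K1.edgeSet ∪ K2.edgeSet ∪ {s(a1, a2), s(b1, b2)}

/-- Double biwheel of type II: two vertex-disjoint partial biwheels of order
at least eight plus the four edges `a₁a₂`, `b₁b₂`, `u₁w₂`, `w₁u₂`. -/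
def IsDoubleBiwheelII {V : Type*} (G : SimpleGraph V) : Prop :=
  ∃ (K1 K2 : G.Subgraph) (k1 k2 : ℕ) (a1 u1 b1 w1 a2 u2 b2 w2 : V),
    3 ≤ k1 ∧ 3 ≤ k2 ∧
    BiwheelOn G K1 k1 a1 u1 b1 w1 ∧ BiwheelOn G K2 k2 a2 u2 b2 w2 ∧
    K1.verts ∩ K2.verts = ∅ ∧ K1.verts ∪ K2.verts = Set.univ ∧
    G.edgeSet = K1.edgeSet ∪ K2.edgeSet ∪
      {s(a1, a2), s(b1, b2), s(u1, w2), s(w1, u2)}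

/-- Double ladder of type II. -/
def IsDoubleLadderII {V : Type*} (G : SimpleGraph V) : Prop :=
  ∃ (K1 K2 : G.Subgraph) (m1 m2 : ℕ) (a1 u1 b1 w1 a2 u2 b2 w2 : V),
    LadderOn G K1 m1 a1 u1 b1 w1 ∧ LadderOn G K2 m2 a2 u2 b2 w2 ∧
    K1.verts ∩ K2.verts = ∅ ∧ K1.verts ∪ K2.verts = Set.univ ∧
    G.edgeSet = K1.edgeSet ∪ K2.edgeSet ∪
      {s(a1, a2), s(b1, b2), s(u1, w2), s(w1, u2)}

/-- Laddered biwheel of type II. -/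
def IsLadderedBiwheelII {V : Type*} (G : SimpleGraph V) : Prop :=
  ∃ (K1 K2 : G.Subgraph) (k1 m2 : ℕ) (a1 u1 b1 w1 a2 u2 b2 w2 : V),
    3 ≤ k1 ∧
    BiwheelOn G K1 k1 a1 u1 b1 w1 ∧ LadderOn G K2 m2 a2 u2 b2 w2 ∧
    K1.verts ∩ K2.verts = ∅ ∧ K1.verts ∪ K2.verts = Set.univ ∧
    G.edgeSet = K1.edgeSet ∪ K2.edgeSet ∪
      {s(a1, a2), s(b1, b2), s(u1, w2), s(w1, u2)}

/-- Membership in one of the eleven infinite families. -/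
def InEleven {V : Type*} (G : SimpleGraph V) : Prop :=
  IsTruncatedBiwheel G ∨ IsPrism G ∨ IsMobiusLadder G ∨ IsStaircase G ∨
  IsPseudoBiwheel G ∨ IsDoubleBiwheelI G ∨ IsDoubleLadderI G ∨
  IsLadderedBiwheelI G ∨ IsDoubleBiwheelII G ∨ IsDoubleLadderII G ∨
  IsLadderedBiwheelII G

/-- An `R`-ladder configuration: a subgraph `K` of `H := G − R` which is a
ladder with external rungs `au` and `bw` (free corners `u`, `w`) such that
every vertex of `K` except possibly `u` and `w` is cubic in `G`, the corners
`a` and `b` lie in `V(R)`, and every internal rung is an `R`-thin edge of `G`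
whose index is two. -/
def RLadderConfig {V : Type*} (G : SimpleGraph V) (α β : Sym2 V)
    (K : (G.deleteEdges {α, β}).Subgraph) (a u b w : V) : Prop :=
  ∃ (m : ℕ) (hm : 3 ≤ m) (φ : ladderGraph m ≃g K.coe),
    (φ ((0 : Fin 2), (⟨0, by omega⟩ : Fin m))).val = a ∧
    (φ ((1 : Fin 2), (⟨0, by omega⟩ : Fin m))).val = u ∧
    (if m % 2 = 1 then
        (φ ((0 : Fin 2), (⟨m - 1, by omega⟩ : Fin m))).val = w ∧
        (φ ((1 : Fin 2), (⟨m - 1, by omega⟩ : Fin m))).val = b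
      else
        (φ ((1 : Fin 2), (⟨m - 1, by omega⟩ : Fin m))).val = w ∧
        (φ ((0 : Fin 2), (⟨m - 1, by omega⟩ : Fin m))).val = b) ∧
    (∀ v ∈ K.verts, v ≠ u → v ≠ w → degOf G v = 3) ∧
    a ∈ VR α β ∧ b ∈ VR α β ∧
    (∀ i : Fin m, 0 < i.val → i.val < m - 1 →
      RThin G α β s((φ ((0 : Fin 2), i)).val, (φ ((1 : Fin 2), i)).val) ∧
      barrierIndex
        (G.deleteEdges {s((φ ((0 : Fin 2), i)).val, (φ ((1 : Fin 2), i)).val)}) = 2)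

/-- An `R`-biwheel configuration: a subgraph `K` of `H := G − R` which is a
partial biwheel with external spokes `au` and `bw` (hubs `u`, `w`) such that
the hubs are not cubic in `G`, every other vertex of `K` is cubic in `G`, the
ends `a` and `b` lie in `V(R)`, and every internal spoke is an `R`-thin edge
of `G` whose index is one. -/
def RBiwheelConfig {V : Type*} (G : SimpleGraph V) (α β : Sym2 V)
    (K : (G.deleteEdges {α, β}).Subgraph) (a u b w : V) : Prop :=
  ∃ (k : ℕ) (hk : 2 ≤ k) (φ : biwheelGraph k ≃g K.coe),
    (φ (Sum.inl (⟨0, by omega⟩ : Fin (2 * k)))).val = a ∧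
    (φ (Sum.inl (⟨2 * k - 1, by omega⟩ : Fin (2 * k)))).val = b ∧
    (φ (Sum.inr 0)).val = u ∧
    (φ (Sum.inr 1)).val = w ∧
    degOf G u ≠ 3 ∧ degOf G w ≠ 3 ∧
    (∀ v ∈ K.verts, v ≠ u → v ≠ w → degOf G v = 3) ∧
    a ∈ VR α β ∧ b ∈ VR α β ∧
    (∀ e ∈ K.edgeSet, (u ∈ e ∨ w ∈ e) → e ≠ s(a, u) → e ≠ s(b, w) →
      RThin G α β e ∧ barrierIndex (G.deleteEdges {e}) = 1)

/-- An `R`-configuration: an `R`-ladder or an `R`-biwheel, with free corners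
`u` and `w`. -/
def RConfig {V : Type*} (G : SimpleGraph V) (α β : Sym2 V)
    (K : (G.deleteEdges {α, β}).Subgraph) (a u b w : V) : Prop :=
  RLadderConfig G α β K a u b w ∨ RBiwheelConfig G α β K a u b w

/-- A 4-cycle on the four (distinct) vertices `v0 v1 v2 v3`. -/
def Is4Cycle {V : Type*} (H : SimpleGraph V) (v0 v1 v2 v3 : V) : Prop :=
  v0 ≠ v1 ∧ v0 ≠ v2 ∧ v0 ≠ v3 ∧ v1 ≠ v2 ∧ v1 ≠ v3 ∧ v2 ≠ v3 ∧
  H.Adj v0 v1 ∧ H.Adj v1 v2 ∧ H.Adj v2 v3 ∧ H.Adj v3 v0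

/-- The cut `∂(X)`. -/
def edgeCutOf {V : Type*} (G : SimpleGraph V) (X : Set V) : Set (Sym2 V) :=
  {e | e ∈ G.edgeSet ∧ ∃ p q : V, e = s(p, q) ∧ p ∈ X ∧ q ∉ X}

/-- The cut `∂(X)` is tight: every perfect matching contains exactly one of
its edges. -/
def TightCut {V : Type*} (G : SimpleGraph V) (X : Set V) : Prop :=
  ∀ M : G.Subgraph, M.IsPerfectMatching → (M.edgeSet ∩ edgeCutOf G X).ncard = 1

/-- A brace: a bipartite matching covered graph with no nontrivial tight cut. -/
def IsBrace {V : Type*} (G : SimpleGraph V) : Prop :=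
  BipartiteGraph G ∧ MatchingCovered G ∧
    ¬ ∃ X : Set V, 2 ≤ X.ncard ∧ 2 ≤ Xᶜ.ncard ∧ TightCut G X


section Aux
set_option linter.unusedSectionVars false


open Classical in
/-- From a perfect matching subgraph, an involution partner function. -/
lemma exists_invol {W : Type*} (Γ : SimpleGraph W) (M : Γ.Subgraph)
    (hM : M.IsPerfectMatching) :
    ∃ f : W → W, (∀ v, Γ.Adj v (f v)) ∧ (∀ v, f (f v) = v) ∧
      (∀ v w, M.Adj v w ↔ f v = w) := by
  have hx : ∀ v : W, ∃! w, M.Adj v w := fun v => hM.1 (hM.2 v)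
  refine ⟨fun v => (hx v).choose, ?_, ?_, ?_⟩
  · intro v; exact M.adj_sub (hx v).choose_spec.1
  · intro v
    exact ((hx ((hx v).choose)).choose_spec.2 v ((hx v).choose_spec.1.symm)).symm
  · intro v w
    constructor
    · intro h; exact ((hx v).choose_spec.2 w h).symm
    · rintro rfl; exact (hx v).choose_spec.1

/-- From an adjacency involution, a perfect matching subgraph containing all pairs. -/
lemma pm_of_invol {W : Type*} (Γ : SimpleGraph W) (f : W → W)
    (hadj : ∀ v, Γ.Adj v (f v)) (hinv : ∀ v, f (f v) = v) :
    ∃ M : Γ.Subgraph, M.IsPerfectMatching ∧ ∀ v, M.Adj v (f v) := by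
  refine ⟨⟨Set.univ, fun x y => f x = y ∧ f y = x, ?_, fun _ => trivial, ?_⟩, ⟨?_, fun v => trivial⟩, ?_⟩
  · rintro x y ⟨rfl, h2⟩; exact hadj x
  · constructor; rintro x y ⟨h1, h2⟩; exact ⟨h2, h1⟩
  · rintro v -
    refine ⟨f v, ⟨rfl, hinv v⟩, ?_⟩
    rintro y ⟨rfl, h2⟩; rfl
  · intro v; exact ⟨rfl, hinv v⟩

/-- Perfect matching of an induced subgraph from a pairing on the set. -/
lemma inducePM_of_pairing {V : Type*} (H : SimpleGraph V) (s : Set V) (f : V → V)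
    (h1 : ∀ v ∈ s, f v ∈ s) (h2 : ∀ v ∈ s, H.Adj v (f v))
    (h3 : ∀ v ∈ s, f (f v) = v) : HasPerfMatching (H.induce s) := by
  obtain ⟨M, hM, -⟩ := pm_of_invol (H.induce s) (fun x => ⟨f x, h1 x x.2⟩)
    (fun x => by simpa using h2 x x.2) (fun x => Subtype.ext (h3 x x.2))
  exact ⟨M, hM⟩

open Classical in
/-- From a PM of an induced subgraph, a global pairing function. -/
lemma pairing_of_inducePM {V : Type*} (H : SimpleGraph V) (s : Set V)
    (h : HasPerfMatching (H.induce s)) :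
    ∃ f : V → V, ∀ v ∈ s, f v ∈ s ∧ H.Adj v (f v) ∧ f (f v) = v := by
  obtain ⟨M, hM⟩ := h
  obtain ⟨g, hg1, hg2, -⟩ := exists_invol _ M hM
  refine ⟨fun v => if h : v ∈ s then (g ⟨v, h⟩ : V) else v, ?_⟩
  intro v hv
  simp only [dif_pos hv]
  refine ⟨(g ⟨v, hv⟩).2, by simpa using hg1 ⟨v, hv⟩, ?_⟩
  rw [dif_pos (g ⟨v, hv⟩).2]
  have := hg2 ⟨v, hv⟩
  rw [Subtype.ext_iff] at this
  simpa using this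

open Classical in
/-- Hall's theorem packaged: a bijective matching between two equinumerous sides. -/
lemma hall_bijection {V : Type*} [Fintype V] (H : SimpleGraph V) (A' B' : Set V)
    (hcard : A'.ncard = B'.ncard)
    (hhall : ∀ S : Set V, S ⊆ A' → S.ncard ≤ ({v ∈ B' | ∃ x ∈ S, H.Adj x v}).ncard) :
    ∃ g : A' → B', Function.Bijective g ∧ ∀ x : A', H.Adj x (g x) := by
  classical
  set t : A' → Finset V := fun x => {v ∈ B' | H.Adj x v}.toFinset with ht
  have hh : ∀ s : Finset A', s.card ≤ (s.biUnion t).card := by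
    intro s
    set S : Set V := Subtype.val '' (s : Set A') with hS
    have hSsub : S ⊆ A' := by rintro v ⟨x, hx, rfl⟩; exact x.2
    have hScard : S.ncard = s.card := by
      rw [hS, Set.ncard_image_of_injective _ Subtype.val_injective, Set.ncard_coe_finset]
    have hset : ((s.biUnion t : Finset V) : Set V) = {v ∈ B' | ∃ x ∈ S, H.Adj x v} := by
      ext v
      simp only [Finset.coe_biUnion, Set.mem_iUnion, Finset.mem_coe, ht,
        Set.mem_toFinset, Set.mem_setOf_eq, hS, Set.mem_sep_iff]
      constructor
      · rintro ⟨x, hx, hv, hadj⟩; exact ⟨hv, x, ⟨x, hx, rfl⟩, hadj⟩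
      · rintro ⟨hv, y, ⟨x, hx, rfl⟩, hadj⟩; exact ⟨x, hx, hv, hadj⟩
    have := hhall S hSsub
    rwa [hScard, ← hset, Set.ncard_coe_finset] at this
  obtain ⟨f, hfinj, hft⟩ := (Finset.all_card_le_biUnion_card_iff_exists_injective t).1 hh
  have hfB : ∀ x, f x ∈ B' ∧ H.Adj x (f x) := by
    intro x
    have := hft x
    rw [ht, Set.mem_toFinset] at this
    exact this
  haveI : Fintype A' := Fintype.ofFinite _
  haveI : Fintype B' := Fintype.ofFinite _
  refine ⟨fun x => ⟨f x, (hfB x).1⟩, ?_, fun x => (hfB x).2⟩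
  rw [Fintype.bijective_iff_injective_and_card]
  constructor
  · intro x y hxy
    exact hfinj (by simpa [Subtype.ext_iff] using hxy)
  · have h1 : Nat.card A' = Nat.card B' := by
      rwa [Nat.card_coe_set_eq, Nat.card_coe_set_eq]
    simpa [Nat.card_eq_fintype_card] using h1

open Classical in
/-- From a bijective adjacency matching between disjoint sides, a pairing involution. -/
lemma pairing_of_bij {V : Type*} (H : SimpleGraph V) (A' B' : Set V)
    (hd : Disjoint A' B') (g : A' → B') (hbij : Function.Bijective g)
    (hadj : ∀ x : A', H.Adj x (g x)) :
    ∃ f : V → V, (∀ v ∈ A' ∪ B', f v ∈ A' ∪ B' ∧ H.Adj v (f v) ∧ f (f v) = v) ∧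
      (∀ v ∉ A' ∪ B', f v = v) ∧ (∀ v ∈ A', f v ∈ B') := by
  set e := Equiv.ofBijective g hbij with he
  set f : V → V := fun v =>
    if h : v ∈ A' then (g ⟨v, h⟩ : V)
    else if h' : v ∈ B' then (e.symm ⟨v, h'⟩ : V) else v with hf
  have hnAB : ∀ w : V, w ∈ B' → w ∉ A' := fun w hw hA => hd.ne_of_mem hA hw rfl
  have hfA : ∀ (h : _) (hv : h ∈ A'), f h = (g ⟨h, hv⟩ : V) := by
    intro v hv; simp only [hf, dif_pos hv]
  have hfB : ∀ (w : V) (hw : w ∈ B'), f w = (e.symm ⟨w, hw⟩ : V) := by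
    intro w hw
    simp only [hf, dif_neg (hnAB w hw), dif_pos hw]
  refine ⟨f, ?_, ?_, ?_⟩
  · rintro v (hv | hv)
    · have h1 : f v = (g ⟨v, hv⟩ : V) := hfA v hv
      have h2 : f (f v) = (e.symm ⟨(g ⟨v, hv⟩ : V), (g ⟨v, hv⟩).2⟩ : V) := by
        rw [h1]; exact hfB _ (g ⟨v, hv⟩).2
      refine ⟨by rw [h1]; exact Or.inr (g ⟨v, hv⟩).2, by rw [h1]; exact hadj ⟨v, hv⟩, ?_⟩
      rw [h2]
      have : (⟨(g ⟨v, hv⟩ : V), (g ⟨v, hv⟩).2⟩ : B') = e ⟨v, hv⟩ := rfl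
      rw [this, Equiv.symm_apply_apply]
    · have h1 : f v = (e.symm ⟨v, hv⟩ : V) := hfB v hv
      have hmem : (e.symm ⟨v, hv⟩ : V) ∈ A' := (e.symm ⟨v, hv⟩).2
      have h2 : f (f v) = (g (e.symm ⟨v, hv⟩) : V) := by
        rw [h1]
        exact hfA _ hmem
      have hge : g (e.symm ⟨v, hv⟩) = ⟨v, hv⟩ := e.apply_symm_apply ⟨v, hv⟩
      refine ⟨by rw [h1]; exact Or.inl hmem, ?_, by rw [h2, hge]⟩
      rw [h1]
      have := (hadj (e.symm ⟨v, hv⟩)).symm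
      rwa [hge] at this
  · intro v hv
    simp only [hf, dif_neg (fun h => hv (Or.inl h)), dif_neg (fun h => hv (Or.inr h))]
  · intro v hv
    rw [hfA v hv]; exact (g ⟨v, hv⟩).2

/-- Neighbourhood of a set. -/
def nbhd {V : Type*} (H : SimpleGraph V) (S : Set V) : Set V := {v : V | ∃ x ∈ S, H.Adj x v}

/-- Condition (ii). -/
def Cond2 {V : Type*} (H : SimpleGraph V) (A : Set V) : Prop :=
  ∀ S : Set V, S ⊆ A → S.Nonempty → S.ncard + 1 < A.ncard →
    S.ncard + 2 ≤ Set.ncard {v : V | ∃ x ∈ S, H.Adj x v}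

lemma nbhd_mono {V : Type*} (H : SimpleGraph V) {S T : Set V} (h : S ⊆ T) :
    nbhd H S ⊆ nbhd H T := by
  rintro v ⟨x, hx, hadj⟩; exact ⟨x, h hx, hadj⟩

lemma cross_of_walk {V : Type*} {G : SimpleGraph V} {X : Set V} :
    ∀ {u w : V}, G.Walk u w → u ∈ X → w ∉ X → ∃ p q, G.Adj p q ∧ p ∈ X ∧ q ∉ X := by
  intro u w p
  induction p with
  | nil => intro h1 h2; exact absurd h1 h2
  | @cons u v w h p ih =>
    intro h1 h2
    by_cases hv : v ∈ X
    · exact ih hv h2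
    · exact ⟨u, v, h, h1, hv⟩

lemma exists_pair_of_two_le_ncard {V : Type*} {s : Set V} (hfin : s.Finite)
    (h : 2 ≤ s.ncard) : ∃ a b, a ∈ s ∧ b ∈ s ∧ a ≠ b := by
  have := (Set.one_lt_ncard_iff hfin).1 (by omega)
  tauto

lemma cut_compl {V : Type*} (G : SimpleGraph V) (X : Set V) :
    edgeCutOf G Xᶜ = edgeCutOf G X := by
  ext e
  simp only [edgeCutOf, Set.mem_setOf_eq]
  constructor
  · rintro ⟨he, p, q, rfl, hp, hq⟩
    exact ⟨he, q, p, Sym2.eq_swap, by simpa using hq, by simpa using hp⟩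
  · rintro ⟨he, p, q, rfl, hp, hq⟩
    exact ⟨he, q, p, Sym2.eq_swap, by simpa using hq, by simpa using hp⟩

section Bip
variable {V : Type*} [Fintype V] {H : SimpleGraph V} {A B : Set V}

lemma memB_of_adj (hbip : BipartitionOf H A B) {u v : V} (h : H.Adj u v)
    (hu : u ∈ A) : v ∈ B := (hbip.2.2 h).1 hu

lemma memB_of_not_memA (hbip : BipartitionOf H A B) {v : V} (hv : v ∉ A) : v ∈ B := by
  have : v ∈ A ∪ B := hbip.1 ▸ Set.mem_univ v
  exact this.resolve_left hv

lemma not_memA_of_memB (hbip : BipartitionOf H A B) {v : V} (hv : v ∈ B) : v ∉ A :=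
  fun hA => hbip.2.1.ne_of_mem hA hv rfl

lemma memA_of_adj (hbip : BipartitionOf H A B) {u v : V} (h : H.Adj u v)
    (hu : u ∈ B) : v ∈ A := by
  by_contra hv
  exact not_memA_of_memB hbip hu ((hbip.2.2 h).2 (memB_of_not_memA hbip hv))

lemma nbhd_subset_B (hbip : BipartitionOf H A B) {S : Set V} (hS : S ⊆ A) :
    nbhd H S ⊆ B := by
  rintro v ⟨x, hx, hadj⟩
  exact memB_of_adj hbip hadj (hS hx)

/-- C1: lower bound `|N(S)| ≥ |S|+1` for proper nonempty subsets. -/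
lemma nbhd_ge_succ (h2 : Cond2 H A) (hA3 : 3 ≤ A.ncard) {S : Set V}
    (hSA : S ⊆ A) (hSne : S.Nonempty) (hSlt : S.ncard < A.ncard) :
    S.ncard + 1 ≤ (nbhd H S).ncard := by
  rcases lt_or_eq_of_le (Nat.succ_le_of_lt hSlt) with hlt | heq
  · have h' : S.ncard + 2 ≤ (nbhd H S).ncard := h2 S hSA hSne hlt
    omega
  · obtain ⟨x, hx⟩ := hSne
    have hS2 : 2 ≤ S.ncard := by omega
    set S' := S \ {x} with hS'
    have hS'card : S'.ncard = S.ncard - 1 := Set.ncard_diff_singleton_of_mem hx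
    have hS'ne : S'.Nonempty := by
      rw [← Set.ncard_pos, hS'card]; omega
    have hmono : nbhd H S' ⊆ nbhd H S := nbhd_mono H Set.diff_subset
    have h' : S'.ncard + 2 ≤ (nbhd H S').ncard :=
      h2 S' (Set.diff_subset.trans hSA) hS'ne (by omega)
    have hle : (nbhd H S').ncard ≤ (nbhd H S).ncard :=
      Set.ncard_le_ncard hmono (Set.toFinite _)
    omega

/-- C2: `N(S) = B` when `|S| = |A| - 2`. -/
lemma nbhd_eq_B (hbip : BipartitionOf H A B) (hAB : A.ncard = B.ncard)
    (h2 : Cond2 H A) {S : Set V} (hSA : S ⊆ A) (hSne : S.Nonempty)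
    (hScard : S.ncard + 2 = A.ncard) : nbhd H S = B := by
  have h' : S.ncard + 2 ≤ (nbhd H S).ncard := h2 S hSA hSne (by omega)
  exact Set.eq_of_subset_of_ncard_le (nbhd_subset_B hbip hSA) (by omega) (Set.toFinite _)

/-- Every vertex of `B` has a neighbour in `A` avoiding nothing in particular. -/
lemma B_has_nbr (hbip : BipartitionOf H A B) (hAB : A.ncard = B.ncard)
    (h2 : Cond2 H A) (hA3 : 3 ≤ A.ncard) {b : V} (hb : b ∈ B) :
    ∃ a ∈ A, H.Adj a b := by
  obtain ⟨S, hSA, hScard⟩ := Set.exists_subset_card_eq (show A.ncard - 2 ≤ A.ncard by omega)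
  have hSne : S.Nonempty := by rw [← Set.ncard_pos, hScard]; omega
  have := nbhd_eq_B hbip hAB h2 hSA hSne (by omega)
  have hbmem : b ∈ nbhd H S := this ▸ hb
  obtain ⟨x, hx, hadj⟩ := hbmem
  exact ⟨x, hSA hx, hadj⟩

lemma A_has_nbr (h2 : Cond2 H A) (hA3 : 3 ≤ A.ncard) {a : V} (ha : a ∈ A) :
    ∃ b, H.Adj a b := by
  have h1 : ({a} : Set V).ncard + 1 ≤ (nbhd H {a}).ncard :=
    nbhd_ge_succ h2 hA3 (Set.singleton_subset_iff.2 ha) ⟨a, rfl⟩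
      (by rw [Set.ncard_singleton]; omega)
  have : (nbhd H {a}).Nonempty := by
    rw [← Set.ncard_pos]; omega
  obtain ⟨v, x, hx, hadj⟩ := this
  rw [Set.mem_singleton_iff] at hx
  exact ⟨v, hx ▸ hadj⟩

end Bip

section Bip2
variable {V : Type*} [Fintype V] {H : SimpleGraph V} {A B : Set V}

/-- Condition (ii) implies connectivity. -/
lemma conn_of_cond2 (hbip : BipartitionOf H A B) (hAB : A.ncard = B.ncard)
    (h2 : Cond2 H A) (hA3 : 3 ≤ A.ncard) : H.Connected := by
  have hBne : B.Nonempty := by rw [← Set.ncard_pos]; omega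
  obtain ⟨b0, hb0⟩ := hBne
  set RA : Set V := {a ∈ A | H.Reachable a b0} with hRA
  have hRAsub : RA ⊆ A := fun v hv => hv.1
  have hRAne : RA.Nonempty := by
    obtain ⟨a, ha, hadj⟩ := B_has_nbr hbip hAB h2 hA3 hb0
    exact ⟨a, ha, hadj.reachable⟩
  have hRAeq : RA = A := by
    by_contra hne
    have hTne : (A \ RA).Nonempty := Set.nonempty_of_ssubset ⟨hRAsub, fun h => hne
      (Set.Subset.antisymm hRAsub h)⟩
    set T := A \ RA with hT
    have hdisj : Disjoint (nbhd H T) (nbhd H RA) := by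
      rw [Set.disjoint_left]
      rintro v ⟨t, ht, hadjt⟩ ⟨r, hr, hadjr⟩
      exact ht.2 ⟨ht.1, (hadjt.reachable.trans hadjr.reachable.symm).trans hr.2⟩
    have hTA : T ⊆ A := Set.diff_subset
    have hRAcard : RA.ncard < A.ncard := by
      have h1 : T.ncard = A.ncard - RA.ncard := Set.ncard_diff hRAsub (Set.toFinite _)
      have h2' : 0 < T.ncard := (Set.ncard_pos (Set.toFinite _)).2 hTne
      have h3 : RA.ncard ≤ A.ncard := Set.ncard_le_ncard hRAsub (Set.toFinite _)
      omega
    have hTcard : T.ncard < A.ncard := by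
      have h1 : T.ncard = A.ncard - RA.ncard := Set.ncard_diff hRAsub (Set.toFinite _)
      have h2' : 0 < RA.ncard := (Set.ncard_pos (Set.toFinite _)).2 hRAne
      omega
    have hN1 := nbhd_ge_succ h2 hA3 hTA hTne hTcard
    have hN2 := nbhd_ge_succ h2 hA3 hRAsub hRAne hRAcard
    have hsum : (nbhd H T).ncard + (nbhd H RA).ncard ≤ B.ncard := by
      rw [← Set.ncard_union_eq hdisj (Set.toFinite _) (Set.toFinite _)]
      exact Set.ncard_le_ncard (Set.union_subset (nbhd_subset_B hbip hTA)
        (nbhd_subset_B hbip hRAsub)) (Set.toFinite _)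
    have hTRA : T.ncard + RA.ncard = A.ncard := by
      have h1 : T.ncard = A.ncard - RA.ncard := Set.ncard_diff hRAsub (Set.toFinite _)
      have h3 : RA.ncard ≤ A.ncard := Set.ncard_le_ncard hRAsub (Set.toFinite _)
      omega
    omega
  have hreach : ∀ v : V, H.Reachable v b0 := by
    intro v
    by_cases hv : v ∈ A
    · exact (hRAeq ▸ hv : v ∈ RA).2
    · obtain ⟨a, ha, hadj⟩ := B_has_nbr hbip hAB h2 hA3 (memB_of_not_memA hbip hv)
      exact hadj.symm.reachable.trans (hRAeq ▸ ha : a ∈ RA).2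
  rw [SimpleGraph.connected_iff]
  refine ⟨fun u v => (hreach u).trans (hreach v).symm, ?_⟩
  exact ⟨b0⟩

/-- Every `A`–`B` edge is in some perfect matching, given (ii). -/
lemma edge_in_pm (hbip : BipartitionOf H A B) (hAB : A.ncard = B.ncard)
    (h2 : Cond2 H A) (hA3 : 3 ≤ A.ncard) {a b : V} (ha : a ∈ A) (hb : b ∈ B)
    (hadj : H.Adj a b) : ∃ M : H.Subgraph, M.IsPerfectMatching ∧ M.Adj a b := by
  classical
  set A' := A \ {a} with hA'
  set B' := B \ {b} with hB'
  have hA'card : A'.ncard = A.ncard - 1 := Set.ncard_diff_singleton_of_mem ha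
  have hB'card : B'.ncard = B.ncard - 1 := Set.ncard_diff_singleton_of_mem hb
  have hcard' : A'.ncard = B'.ncard := by omega
  have hhall : ∀ S : Set V, S ⊆ A' →
      S.ncard ≤ ({v ∈ B' | ∃ x ∈ S, H.Adj x v}).ncard := by
    intro S hS
    rcases S.eq_empty_or_nonempty with rfl | hSne
    · simp
    have hSA : S ⊆ A := hS.trans Set.diff_subset
    have hSlt : S.ncard < A.ncard := by
      have := Set.ncard_le_ncard hS (Set.toFinite _)
      omega
    have hN := nbhd_ge_succ h2 hA3 hSA hSne hSlt
    have hsub : nbhd H S \ {b} ⊆ {v ∈ B' | ∃ x ∈ S, H.Adj x v} := by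
      rintro v ⟨⟨x, hx, hadjx⟩, hvb⟩
      exact ⟨⟨nbhd_subset_B hbip hSA ⟨x, hx, hadjx⟩, hvb⟩, x, hx, hadjx⟩
    have hd : (nbhd H S).ncard ≤ (nbhd H S \ {b}).ncard + 1 := by
      have h1 : nbhd H S ⊆ (nbhd H S \ {b}) ∪ {b} := by
        intro v hv; by_cases hvb : v = b
        · exact Or.inr (by simp [hvb])
        · exact Or.inl ⟨hv, hvb⟩
      calc (nbhd H S).ncard ≤ ((nbhd H S \ {b}) ∪ {b}).ncard :=
            Set.ncard_le_ncard h1 (Set.toFinite _)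
        _ ≤ (nbhd H S \ {b}).ncard + ({b} : Set V).ncard := Set.ncard_union_le _ _
        _ = (nbhd H S \ {b}).ncard + 1 := by rw [Set.ncard_singleton]
    have := Set.ncard_le_ncard hsub (Set.toFinite _)
    omega
  obtain ⟨g, hgbij, hgadj⟩ := hall_bijection H A' B' hcard' hhall
  have hd' : Disjoint A' B' := hbip.2.1.mono Set.diff_subset Set.diff_subset
  obtain ⟨f₀, hf₀, hf₀out, hf₀AB⟩ := pairing_of_bij H A' B' hd' g hgbij hgadj
  have hab : a ≠ b := hadj.ne
  have hanot : a ∉ A' ∪ B' := by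
    rintro (h | h)
    · exact h.2 rfl
    · exact not_memA_of_memB hbip h.1 ha
  have hbnot : b ∉ A' ∪ B' := by
    rintro (h | h)
    · exact not_memA_of_memB hbip hb h.1
    · exact h.2 rfl
  have hmem : ∀ v : V, v ≠ a → v ≠ b → v ∈ A' ∪ B' := by
    intro v hva hvb
    by_cases hv : v ∈ A
    · exact Or.inl ⟨hv, hva⟩
    · exact Or.inr ⟨memB_of_not_memA hbip hv, hvb⟩
  set f : V → V := fun v => if v = a then b else if v = b then a else f₀ v with hfdef
  have hfa : f a = b := by simp [hfdef]
  have hfb : f b = a := by simp [hfdef, hab.symm]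
  have hfother : ∀ v, v ≠ a → v ≠ b → f v = f₀ v := by
    intro v h1 h3; simp [hfdef, h1, h3]
  have hadjf : ∀ v, H.Adj v (f v) := by
    intro v
    by_cases h1 : v = a
    · rw [h1, hfa]; exact hadj
    by_cases h3 : v = b
    · rw [h3, hfb]; exact hadj.symm
    · rw [hfother v h1 h3]; exact (hf₀ v (hmem v h1 h3)).2.1
  have hinvf : ∀ v, f (f v) = v := by
    intro v
    by_cases h1 : v = a
    · rw [h1, hfa, hfb]
    by_cases h3 : v = b
    · rw [h3, hfb, hfa]
    · rw [hfother v h1 h3]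
      obtain ⟨hmem2, -, hinv⟩ := hf₀ v (hmem v h1 h3)
      have hne1 : f₀ v ≠ a := fun h => hanot (h ▸ hmem2)
      have hne2 : f₀ v ≠ b := fun h => hbnot (h ▸ hmem2)
      rw [hfother _ hne1 hne2, hinv]
  obtain ⟨M, hM, hMadj⟩ := pm_of_invol H f hadjf hinvf
  exact ⟨M, hM, hfa ▸ hMadj a⟩

end Bip2

section Bip3
variable {V : Type*} [Fintype V] {H : SimpleGraph V} {A B : Set V}

/-- (ii) implies (iii). -/
lemma cond2_imp_cond3 (hbip : BipartitionOf H A B) (hAB : A.ncard = B.ncard)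
    (h2 : Cond2 H A) (hA3 : 3 ≤ A.ncard) {a1 a2 b1 b2 : V}
    (ha1 : a1 ∈ A) (ha2 : a2 ∈ A) (hb1 : b1 ∈ B) (hb2 : b2 ∈ B)
    (ha : a1 ≠ a2) (hb : b1 ≠ b2) :
    HasPerfMatching (H.induce (({a1, a2, b1, b2} : Set V)ᶜ)) := by
  classical
  set A' := A \ {a1, a2} with hA'
  set B' := B \ {b1, b2} with hB'
  have hA'card : A'.ncard = A.ncard - 2 := by
    rw [hA', Set.ncard_diff (by simp [Set.insert_subset_iff, ha1, ha2]) (Set.toFinite _),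
      Set.ncard_pair ha]
  have hB'card : B'.ncard = B.ncard - 2 := by
    rw [hB', Set.ncard_diff (by simp [Set.insert_subset_iff, hb1, hb2]) (Set.toFinite _),
      Set.ncard_pair hb]
  have hcard' : A'.ncard = B'.ncard := by omega
  have hhall : ∀ S : Set V, S ⊆ A' →
      S.ncard ≤ ({v ∈ B' | ∃ x ∈ S, H.Adj x v}).ncard := by
    intro S hS
    rcases S.eq_empty_or_nonempty with rfl | hSne
    · simp
    have hSA : S ⊆ A := hS.trans Set.diff_subset
    have hSlt : S.ncard + 1 < A.ncard := by
      have := Set.ncard_le_ncard hS (Set.toFinite _)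
      omega
    have hN : S.ncard + 2 ≤ (nbhd H S).ncard := h2 S hSA hSne hSlt
    have hsub : nbhd H S \ {b1, b2} ⊆ {v ∈ B' | ∃ x ∈ S, H.Adj x v} := by
      rintro v ⟨⟨x, hx, hadjx⟩, hvb⟩
      exact ⟨⟨nbhd_subset_B hbip hSA ⟨x, hx, hadjx⟩, hvb⟩, x, hx, hadjx⟩
    have hd : (nbhd H S).ncard ≤ (nbhd H S \ {b1, b2}).ncard + 2 := by
      have h1 : nbhd H S ⊆ (nbhd H S \ {b1, b2}) ∪ {b1, b2} := by
        intro v hv; by_cases hvb : v ∈ ({b1, b2} : Set V)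
        · exact Or.inr hvb
        · exact Or.inl ⟨hv, hvb⟩
      calc (nbhd H S).ncard ≤ ((nbhd H S \ {b1, b2}) ∪ {b1, b2}).ncard :=
            Set.ncard_le_ncard h1 (Set.toFinite _)
        _ ≤ (nbhd H S \ {b1, b2}).ncard + ({b1, b2} : Set V).ncard := Set.ncard_union_le _ _
        _ = (nbhd H S \ {b1, b2}).ncard + 2 := by rw [Set.ncard_pair hb]
    have := Set.ncard_le_ncard hsub (Set.toFinite _)
    omega
  obtain ⟨g, hgbij, hgadj⟩ := hall_bijection H A' B' hcard' hhall
  have hd' : Disjoint A' B' := hbip.2.1.mono Set.diff_subset Set.diff_subset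
  obtain ⟨f₀, hf₀, -, -⟩ := pairing_of_bij H A' B' hd' g hgbij hgadj
  have hset : A' ∪ B' = ({a1, a2, b1, b2} : Set V)ᶜ := by
    ext v
    simp only [Set.mem_union, hA', hB', Set.mem_diff, Set.mem_compl_iff,
      Set.mem_insert_iff, Set.mem_singleton_iff]
    constructor
    · rintro (⟨hvA, hv⟩ | ⟨hvB, hv⟩)
      · push_neg at hv
        refine fun h => ?_
        rcases h with rfl | rfl | rfl | rfl
        · exact hv.1 rfl
        · exact hv.2 rfl
        · exact not_memA_of_memB hbip hb1 hvA
        · exact not_memA_of_memB hbip hb2 hvA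
      · push_neg at hv
        refine fun h => ?_
        rcases h with rfl | rfl | rfl | rfl
        · exact not_memA_of_memB hbip hvB ha1
        · exact not_memA_of_memB hbip hvB ha2
        · exact hv.1 rfl
        · exact hv.2 rfl
    · intro h
      push_neg at h
      by_cases hv : v ∈ A
      · exact Or.inl ⟨hv, by simp [h.1, h.2.1]⟩
      · exact Or.inr ⟨memB_of_not_memA hbip hv, by simp [h.2.2.1, h.2.2.2]⟩
  refine inducePM_of_pairing H _ f₀ ?_ ?_ ?_
  · intro v hv; rw [← hset] at hv ⊢; exact (hf₀ v hv).1
  · intro v hv; rw [← hset] at hv; exact (hf₀ v hv).2.1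
  · intro v hv; rw [← hset] at hv; exact (hf₀ v hv).2.2

/-- (iii) implies (ii). -/
lemma cond3_imp_cond2 (hbip : BipartitionOf H A B) (hAB : A.ncard = B.ncard)
    (hA3 : 3 ≤ A.ncard)
    (h3 : ∀ a1 a2 b1 b2 : V, a1 ∈ A → a2 ∈ A → b1 ∈ B → b2 ∈ B →
        a1 ≠ a2 → b1 ≠ b2 →
        HasPerfMatching (H.induce (({a1, a2, b1, b2} : Set V)ᶜ))) :
    Cond2 H A := by
  intro S hSA hSne hSlt
  by_contra hcon
  push_neg at hcon
  have hNle : (nbhd H S).ncard ≤ S.ncard + 1 := by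
    have : Set.ncard {v : V | ∃ x ∈ S, H.Adj x v} = (nbhd H S).ncard := rfl
    omega
  have hSpos : 0 < S.ncard := (Set.ncard_pos (Set.toFinite _)).2 hSne
  -- two vertices of A outside S
  have hAScard : 2 ≤ (A \ S).ncard := by
    rw [Set.ncard_diff hSA (Set.toFinite _)]; omega
  obtain ⟨a1, a2, ha1, ha2, ha12⟩ := exists_pair_of_two_le_ncard (Set.toFinite _) hAScard
  -- choose b1 b2
  have hkey : ∃ b1 b2 : V, b1 ∈ B ∧ b2 ∈ B ∧ b1 ≠ b2 ∧
      (nbhd H S \ {b1, b2}).ncard + 1 ≤ S.ncard := by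
    by_cases h2n : 2 ≤ (nbhd H S).ncard
    · obtain ⟨b1, b2, hb1, hb2, hb12⟩ :=
        exists_pair_of_two_le_ncard (Set.toFinite _) h2n
      refine ⟨b1, b2, nbhd_subset_B hbip hSA hb1, nbhd_subset_B hbip hSA hb2, hb12, ?_⟩
      rw [Set.ncard_diff (by simp [Set.insert_subset_iff, hb1, hb2]) (Set.toFinite _),
        Set.ncard_pair hb12]
      omega
    · push_neg at h2n
      have hB2 : 2 ≤ B.ncard := by omega
      rcases (nbhd H S).eq_empty_or_nonempty with hemp | ⟨b0, hb0⟩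
      · obtain ⟨b1, b2, hb1, hb2, hb12⟩ := exists_pair_of_two_le_ncard (Set.toFinite _) hB2
        refine ⟨b1, b2, hb1, hb2, hb12, ?_⟩
        rw [hemp]
        simp only [Set.empty_diff, Set.ncard_empty]
        omega
      · have hb0B : b0 ∈ B := nbhd_subset_B hbip hSA hb0
        have hBd : 1 ≤ (B \ {b0}).ncard := by
          rw [Set.ncard_diff_singleton_of_mem hb0B]; omega
        have : (B \ {b0}).Nonempty := by rw [← Set.ncard_pos]; omega
        obtain ⟨b2, hb2B, hb2ne⟩ := this
        refine ⟨b0, b2, hb0B, hb2B, fun h => hb2ne (h ▸ rfl), ?_⟩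
        have hsub : nbhd H S \ {b0, b2} = ∅ := by
          rw [Set.diff_eq_empty]
          intro v hv
          have h1 : (nbhd H S).ncard = 1 := by
            have := (Set.ncard_pos (Set.toFinite (nbhd H S))).2 ⟨b0, hb0⟩
            omega
          obtain ⟨c, hc⟩ := Set.ncard_eq_one.1 h1
          rw [hc] at hv hb0
          simp only [Set.mem_singleton_iff] at hv hb0
          simp [hv, hb0]
        rw [hsub]
        simp only [Set.ncard_empty]
        omega
  obtain ⟨b1, b2, hb1B, hb2B, hb12, hcnt⟩ := hkey
  obtain ⟨f, hf⟩ := pairing_of_inducePM H _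
    (h3 a1 a2 b1 b2 (ha1.1) (ha2.1) hb1B hb2B ha12 hb12)
  set C := ({a1, a2, b1, b2} : Set V)ᶜ with hC
  have hSC : S ⊆ C := by
    intro x hx
    simp only [hC, Set.mem_compl_iff, Set.mem_insert_iff, Set.mem_singleton_iff]
    push_neg
    refine ⟨fun h => ha1.2 (h ▸ hx), fun h => ha2.2 (h ▸ hx),
      fun h => not_memA_of_memB hbip hb1B (h ▸ hSA hx),
      fun h => not_memA_of_memB hbip hb2B (h ▸ hSA hx)⟩
  have hmap : ∀ x ∈ S, f x ∈ nbhd H S \ {b1, b2} := by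
    intro x hx
    obtain ⟨hfC, hfadj, -⟩ := hf x (hSC hx)
    refine ⟨⟨x, hx, hfadj⟩, ?_⟩
    simp only [hC, Set.mem_compl_iff, Set.mem_insert_iff, Set.mem_singleton_iff] at hfC
    push_neg at hfC
    simp only [Set.mem_insert_iff, Set.mem_singleton_iff]
    push_neg
    exact ⟨hfC.2.2.1, hfC.2.2.2⟩
  have hinj : Set.InjOn f S := by
    intro x hx y hy hxy
    have h1 := (hf x (hSC hx)).2.2
    have h2' := (hf y (hSC hy)).2.2
    rw [← h1, ← h2', hxy]
  have := Set.ncard_le_ncard_of_injOn f hmap hinj (Set.toFinite _)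
  omega

end Bip3

section Tight
variable {V : Type*} [Fintype V] {H : SimpleGraph V} {A B : Set V}

/-- From a tight cut count for one matching, the unique crossing vertex. -/
lemma tight_unique {X : Set V} (M : H.Subgraph)
    (ht : (M.edgeSet ∩ edgeCutOf H X).ncard = 1) (f : V → V)
    (hfM : ∀ v w, M.Adj v w ↔ f v = w) :
    ∃ p0 ∈ X, f p0 ∉ X ∧ ∀ v ∈ X, f v ∉ X → v = p0 := by
  obtain ⟨e0, he0⟩ := Set.ncard_eq_one.1 ht
  have he0mem : e0 ∈ M.edgeSet ∩ edgeCutOf H X := he0 ▸ rfl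
  obtain ⟨heM, -, p, q, he0eq, hp, hq⟩ := he0mem
  rw [he0eq] at heM
  have hfp : f p = q := (hfM p q).1 (SimpleGraph.Subgraph.mem_edgeSet.1 heM)
  refine ⟨p, hp, hfp ▸ hq, ?_⟩
  intro v hv hfv
  have hadj : M.Adj v (f v) := (hfM v (f v)).2 rfl
  have hmem : s(v, f v) ∈ M.edgeSet ∩ edgeCutOf H X := by
    refine ⟨SimpleGraph.Subgraph.mem_edgeSet.2 hadj, ?_, v, f v, rfl, hv, hfv⟩
    exact (M.adj_sub hadj).symm.symm
  rw [he0] at hmem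
  rw [Set.mem_singleton_iff, he0eq, Sym2.eq_iff] at hmem
  rcases hmem with ⟨h1, -⟩ | ⟨h1, -⟩
  · exact h1
  · exact absurd (h1 ▸ hv) hq

/-- Parity count on a shore: the matched-out vertex side has one extra vertex. -/
lemma count_shore {A' B' X : Set V} (hd : Disjoint A' B') (f : V → V)
    (hAB' : ∀ v ∈ A', f v ∈ B') (hBA' : ∀ v ∈ B', f v ∈ A')
    (hinv : ∀ v, f (f v) = v) {p0 : V} (hp0 : p0 ∈ X) (hq0 : f p0 ∉ X)
    (huniq : ∀ v ∈ X, f v ∉ X → v = p0) (hp0A : p0 ∈ A') :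
    (A' ∩ X).ncard = (B' ∩ X).ncard + 1 := by
  have hinj : ∀ s : Set V, Set.InjOn f s := by
    intro s x hx y hy hxy
    rw [← hinv x, hxy, hinv]
  have h1 : ((A' ∩ X) \ {p0}).ncard ≤ (B' ∩ X).ncard := by
    refine Set.ncard_le_ncard_of_injOn f ?_ (hinj _) (Set.toFinite _)
    rintro v ⟨⟨hvA, hvX⟩, hvp⟩
    refine ⟨hAB' v hvA, ?_⟩
    by_contra hfv
    exact (hvp : v ∉ ({p0} : Set V)) (huniq v hvX hfv ▸ rfl)
  have h2 : (B' ∩ X).ncard ≤ ((A' ∩ X) \ {p0}).ncard := by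
    refine Set.ncard_le_ncard_of_injOn f ?_ (hinj _) (Set.toFinite _)
    rintro v ⟨hvB, hvX⟩
    have hfvX : f v ∈ X := by
      by_contra hfv
      exact hd.ne_of_mem hp0A hvB (huniq v hvX hfv).symm
    refine ⟨⟨hBA' v hvB, hfvX⟩, ?_⟩
    simp only [Set.mem_singleton_iff]
    intro h
    apply hq0
    rw [← h, hinv]
    exact hvX
  have h3 : ((A' ∩ X) \ {p0}).ncard = (A' ∩ X).ncard - 1 :=
    Set.ncard_diff_singleton_of_mem ⟨hp0A, hp0⟩
  have h4 : 0 < (A' ∩ X).ncard := (Set.ncard_pos (Set.toFinite _)).2 ⟨p0, hp0A, hp0⟩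
  omega

/-- Core contradiction: condition (ii) is incompatible with a nontrivial tight cut
whose shore has the `A`-majority. -/
lemma no_tight (hbip : BipartitionOf H A B) (hAB : A.ncard = B.ncard)
    (h2 : Cond2 H A) (hA3 : 3 ≤ A.ncard) (X : Set V)
    (hX2 : 2 ≤ X.ncard) (hXc2 : 2 ≤ Xᶜ.ncard) (ht : TightCut H X)
    (hcount : (A ∩ X).ncard = (B ∩ X).ncard + 1) : False := by
  classical
  -- every cut edge has its X-end in A
  have hstep : ∀ p q : V, H.Adj p q → p ∈ X → q ∉ X → p ∈ A := by
    intro p q hadj hp hq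
    by_contra hpA
    have hpB : p ∈ B := memB_of_not_memA hbip hpA
    have hqA : q ∈ A := memA_of_adj hbip hadj hpB
    obtain ⟨M, hM, hMadj⟩ := edge_in_pm hbip hAB h2 hA3 hqA hpB hadj.symm
    obtain ⟨f, hfadj, hfinv, hfM⟩ := exists_invol H M hM
    obtain ⟨p0, hp0, hq0, huniq⟩ := tight_unique M (ht M hM) f hfM
    have hfp : f p = q := (hfM p q).1 (hMadj.symm)
    have hpp0 : p = p0 := huniq p hp (hfp ▸ hq)
    have hcount2 : (B ∩ X).ncard = (A ∩ X).ncard + 1 := by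
      refine count_shore hbip.2.1.symm f ?_ ?_ hfinv hp0 hq0 huniq (hpp0 ▸ hpB)
      · intro v hv; exact memA_of_adj hbip (hfadj v) hv
      · intro v hv; exact memB_of_adj hbip (hfadj v) hv
    omega
  set S := A \ X with hS
  have hSncard : S.ncard = (A \ X).ncard := rfl
  have hSA : S ⊆ A := Set.diff_subset
  have hNsub : nbhd H S ⊆ B \ X := by
    rintro v ⟨x, hx, hadj⟩
    have hvB : v ∈ B := memB_of_adj hbip hadj (hSA hx)
    refine ⟨hvB, fun hvX => ?_⟩
    have := hstep v x hadj.symm hvX hx.2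
    exact not_memA_of_memB hbip hvB this
  -- counting
  have hsplitA : (A ∩ X).ncard + (A \ X).ncard = A.ncard :=
    Set.ncard_inter_add_ncard_diff_eq_ncard A X (Set.toFinite _)
  have hsplitB : (B ∩ X).ncard + (B \ X).ncard = B.ncard :=
    Set.ncard_inter_add_ncard_diff_eq_ncard B X (Set.toFinite _)
  have hXsplit : X.ncard = (A ∩ X).ncard + (B ∩ X).ncard := by
    have h1 : X = (A ∩ X) ∪ (B ∩ X) := by
      ext v
      constructor
      · intro hv
        by_cases hvA : v ∈ A
        · exact Or.inl ⟨hvA, hv⟩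
        · exact Or.inr ⟨memB_of_not_memA hbip hvA, hv⟩
      · rintro (⟨-, hv⟩ | ⟨-, hv⟩) <;> exact hv
    calc X.ncard = ((A ∩ X) ∪ (B ∩ X)).ncard := congrArg Set.ncard h1
      _ = (A ∩ X).ncard + (B ∩ X).ncard :=
        Set.ncard_union_eq (hbip.2.1.mono Set.inter_subset_left Set.inter_subset_left)
          (Set.toFinite _) (Set.toFinite _)
  have hXcsplit : Xᶜ.ncard = (A \ X).ncard + (B \ X).ncard := by
    have h1 : Xᶜ = (A \ X) ∪ (B \ X) := by
      ext v
      constructor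
      · intro hv
        by_cases hvA : v ∈ A
        · exact Or.inl ⟨hvA, hv⟩
        · exact Or.inr ⟨memB_of_not_memA hbip hvA, hv⟩
      · rintro (⟨-, hv⟩ | ⟨-, hv⟩) <;> exact hv
    calc Xᶜ.ncard = ((A \ X) ∪ (B \ X)).ncard := congrArg Set.ncard h1
      _ = (A \ X).ncard + (B \ X).ncard :=
        Set.ncard_union_eq (hbip.2.1.mono Set.diff_subset Set.diff_subset)
          (Set.toFinite _) (Set.toFinite _)
  have hAX2 : 2 ≤ (A ∩ X).ncard := by omega
  have hSne : S.Nonempty := by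
    rw [← Set.ncard_pos]
    by_contra h
    push_neg at h
    have : (A \ X).ncard = 0 := by omega
    omega
  have hNlow := h2 S hSA hSne (by omega)
  have hNup : Set.ncard {v : V | ∃ x ∈ S, H.Adj x v} ≤ (B \ X).ncard :=
    Set.ncard_le_ncard hNsub (Set.toFinite _)
  omega

/-- (ii) implies matching covered. -/
lemma mc_of_cond2 (hbip : BipartitionOf H A B) (hAB : A.ncard = B.ncard)
    (h2 : Cond2 H A) (hA3 : 3 ≤ A.ncard) (hcard : 6 ≤ Nat.card V) :
    MatchingCovered H := by
  refine ⟨by omega, conn_of_cond2 hbip hAB h2 hA3, ?_⟩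
  intro e he
  induction e with
  | _ p q =>
    rw [SimpleGraph.mem_edgeSet] at he
    by_cases hp : p ∈ A
    · obtain ⟨M, hM, hMadj⟩ := edge_in_pm hbip hAB h2 hA3 hp (memB_of_adj hbip he hp) he
      exact ⟨M, hM, SimpleGraph.Subgraph.mem_edgeSet.2 hMadj⟩
    · have hpB : p ∈ B := memB_of_not_memA hbip hp
      have hqA : q ∈ A := memA_of_adj hbip he hpB
      obtain ⟨M, hM, hMadj⟩ := edge_in_pm hbip hAB h2 hA3 hqA hpB he.symm
      refine ⟨M, hM, ?_⟩
      rw [Sym2.eq_swap]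
      exact SimpleGraph.Subgraph.mem_edgeSet.2 hMadj

/-- (ii) implies brace. -/
lemma cond2_imp_brace (hbip : BipartitionOf H A B) (hAB : A.ncard = B.ncard)
    (h2 : Cond2 H A) (hA3 : 3 ≤ A.ncard) (hcard : 6 ≤ Nat.card V) :
    IsBrace H := by
  have hmc := mc_of_cond2 hbip hAB h2 hA3 hcard
  refine ⟨⟨A, B, hbip⟩, hmc, ?_⟩
  rintro ⟨X, hX2, hXc2, htight⟩
  -- get some perfect matching
  have hAne : A.Nonempty := by rw [← Set.ncard_pos]; omega
  obtain ⟨a, ha⟩ := hAne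
  obtain ⟨b, hadj⟩ := A_has_nbr h2 hA3 ha
  obtain ⟨M, hM, -⟩ := edge_in_pm hbip hAB h2 hA3 ha (memB_of_adj hbip hadj ha) hadj
  obtain ⟨f, hfadj, hfinv, hfM⟩ := exists_invol H M hM
  obtain ⟨p0, hp0, hq0, huniq⟩ := tight_unique M (htight M hM) f hfM
  have hABmap : ∀ v ∈ A, f v ∈ B := fun v hv => memB_of_adj hbip (hfadj v) hv
  have hBAmap : ∀ v ∈ B, f v ∈ A := fun v hv => memA_of_adj hbip (hfadj v) hv
  by_cases hp0A : p0 ∈ A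
  · exact no_tight hbip hAB h2 hA3 X hX2 hXc2 htight
      (count_shore hbip.2.1 f hABmap hBAmap hfinv hp0 hq0 huniq hp0A)
  · have hp0B : p0 ∈ B := memB_of_not_memA hbip hp0A
    have hcnt : (B ∩ X).ncard = (A ∩ X).ncard + 1 :=
      count_shore hbip.2.1.symm f hBAmap hABmap hfinv hp0 hq0 huniq hp0B
    -- pass to the complement shore
    have htight' : TightCut H Xᶜ := by
      intro M' hM'
      rw [cut_compl]
      exact htight M' hM'
    have hsplitA : (A ∩ X).ncard + (A \ X).ncard = A.ncard :=
      Set.ncard_inter_add_ncard_diff_eq_ncard A X (Set.toFinite _)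
    have hsplitB : (B ∩ X).ncard + (B \ X).ncard = B.ncard :=
      Set.ncard_inter_add_ncard_diff_eq_ncard B X (Set.toFinite _)
    have hACXc : A ∩ Xᶜ = A \ X := by rw [Set.diff_eq]
    have hBCXc : B ∩ Xᶜ = B \ X := by rw [Set.diff_eq]
    have hcnt' : (A ∩ Xᶜ).ncard = (B ∩ Xᶜ).ncard + 1 := by
      rw [hACXc, hBCXc]; omega
    exact no_tight hbip hAB h2 hA3 Xᶜ hXc2 (by rw [compl_compl]; exact hX2)
      htight' hcnt'

/-- Brace implies (ii). -/
lemma brace_imp_cond2 (hbip : BipartitionOf H A B) (hAB : A.ncard = B.ncard)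
    (hA3 : 3 ≤ A.ncard) (hbr : IsBrace H) : Cond2 H A := by
  classical
  obtain ⟨-, hmc, hnt⟩ := hbr
  obtain ⟨-, hconn, hedges⟩ := hmc
  intro S hSA hSne hSlt
  by_contra hcon
  push_neg at hcon
  have hNle : (nbhd H S).ncard ≤ S.ncard + 1 := by
    have : Set.ncard {v : V | ∃ x ∈ S, H.Adj x v} = (nbhd H S).ncard := rfl
    omega
  have hSpos : 0 < S.ncard := (Set.ncard_pos (Set.toFinite _)).2 hSne
  have hNsubB : nbhd H S ⊆ B := nbhd_subset_B hbip hSA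
  have hdisjSN : Disjoint S (nbhd H S) := hbip.2.1.mono hSA hNsubB
  set X := S ∪ nbhd H S with hX
  have hXcard : X.ncard = S.ncard + (nbhd H S).ncard :=
    Set.ncard_union_eq hdisjSN (Set.toFinite _) (Set.toFinite _)
  -- A \ S lies outside X
  have hASout : ∀ a ∈ A, a ∉ S → a ∉ X := by
    rintro a haA haS (h | h)
    · exact haS h
    · exact not_memA_of_memB hbip (hNsubB h) haA
  have hAScard : 2 ≤ (A \ S).ncard := by
    rw [Set.ncard_diff hSA (Set.toFinite _)]; omega
  -- S maps into nbhd under any matching involution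
  have hmapS : ∀ f : V → V, (∀ v, H.Adj v (f v)) → ∀ x ∈ S, f x ∈ nbhd H S :=
    fun f hf x hx => ⟨x, hx, hf x⟩
  have hinjf : ∀ (f : V → V), (∀ v, f (f v) = v) → ∀ s : Set V, Set.InjOn f s := by
    intro f hinv s x hx y hy hxy
    rw [← hinv x, hxy, hinv]
  by_cases hc : (nbhd H S).ncard ≤ S.ncard
  · -- find a crossing edge and derive a contradiction
    obtain ⟨a0, a1, ha0, -, -⟩ := exists_pair_of_two_le_ncard (Set.toFinite _) hAScard
    obtain ⟨a, haA, haS⟩ : ∃ a ∈ A, a ∉ S := ⟨a0, ha0.1, ha0.2⟩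
    obtain ⟨s0, hs0⟩ := hSne
    obtain ⟨w⟩ := hconn s0 a
    obtain ⟨p, q, hpq, hpX, hqX⟩ := cross_of_walk w (Or.inl hs0) (hASout a haA haS)
    obtain ⟨M, hM, heM⟩ := hedges s(p, q) ((SimpleGraph.mem_edgeSet H).2 hpq)
    obtain ⟨f, hfadj, hfinv, hfM⟩ := exists_invol H M hM
    have hfp : f p = q := (hfM p q).1 (SimpleGraph.Subgraph.mem_edgeSet.1 heM)
    have hSle : S.ncard ≤ (nbhd H S).ncard :=
      Set.ncard_le_ncard_of_injOn f (hmapS f hfadj) (hinjf f hfinv S) (Set.toFinite _)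
    have himg : f '' S = nbhd H S := by
      refine Set.eq_of_subset_of_ncard_le ?_ ?_ (Set.toFinite _)
      · rintro v ⟨x, hx, rfl⟩; exact hmapS f hfadj x hx
      · rw [Set.ncard_image_of_injOn (hinjf f hfinv S)]; omega
    rcases hpX with hpS | hpN
    · exact hqX (Or.inr (hfp ▸ hmapS f hfadj p hpS))
    · rw [← himg] at hpN
      obtain ⟨x, hx, rfl⟩ := hpN
      rw [hfinv x] at hfp
      exact hqX (Or.inl (hfp ▸ hx))
  · -- build a nontrivial tight cut
    push_neg at hc
    have hNcard : (nbhd H S).ncard = S.ncard + 1 := by omega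
    refine hnt ⟨X, by omega, ?_, ?_⟩
    · -- complement has at least two vertices
      have hsub : A \ S ⊆ Xᶜ := fun a ha => hASout a ha.1 ha.2
      have := Set.ncard_le_ncard hsub (Set.toFinite _)
      omega
    · intro M hM
      obtain ⟨f, hfadj, hfinv, hfM⟩ := exists_invol H M hM
      have himgcard : (f '' S).ncard = S.ncard :=
        Set.ncard_image_of_injOn (hinjf f hfinv S)
      have himgsub : f '' S ⊆ nbhd H S := by
        rintro v ⟨x, hx, rfl⟩; exact hmapS f hfadj x hx
      have hdiff : (nbhd H S \ f '' S).ncard = 1 := by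
        rw [Set.ncard_diff himgsub (Set.toFinite _)]; omega
      obtain ⟨n0, hn0⟩ := Set.ncard_eq_one.1 hdiff
      have hn0mem : n0 ∈ nbhd H S \ f '' S := hn0 ▸ rfl
      have hfn0A : f n0 ∈ A := memA_of_adj hbip (hfadj n0) (hNsubB hn0mem.1)
      have hfn0X : f n0 ∉ X := by
        rintro (h | h)
        · exact hn0mem.2 ⟨f n0, h, hfinv n0⟩
        · exact not_memA_of_memB hbip (hNsubB h) hfn0A
      have hseteq : M.edgeSet ∩ edgeCutOf H X = {s(n0, f n0)} := by
        ext e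
        constructor
        · rintro ⟨heM, -, p, q, rfl, hpX, hqX⟩
          have hfp : f p = q := (hfM p q).1 (SimpleGraph.Subgraph.mem_edgeSet.1 heM)
          rcases hpX with hpS | hpN
          · exact absurd (Or.inr (hfp ▸ hmapS f hfadj p hpS)) hqX
          · have hpimg : p ∉ f '' S := by
              rintro ⟨x, hx, rfl⟩
              rw [hfinv x] at hfp
              exact hqX (Or.inl (hfp ▸ hx))
            have : p ∈ nbhd H S \ f '' S := ⟨hpN, hpimg⟩
            rw [hn0, Set.mem_singleton_iff] at this
            rw [Set.mem_singleton_iff, this, ← hfp, this]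
        · rintro rfl
          refine ⟨SimpleGraph.Subgraph.mem_edgeSet.2 ((hfM n0 (f n0)).2 rfl), ?_,
            n0, f n0, rfl, Or.inr hn0mem.1, hfn0X⟩
          exact (SimpleGraph.mem_edgeSet H).2 (hfadj n0)
      rw [hseteq]
      exact Set.ncard_singleton _

end Tight
end Aux

/-- characterizations of braces. -/
theorem stmt15 {V : Type*} [Fintype V] (H : SimpleGraph V) (A B : Set V)
    (hbip : BipartitionOf H A B) (hAB : A.ncard = B.ncard)
    (hcard : 6 ≤ Nat.card V) :
    (IsBrace H ↔
      (∀ S : Set V, S ⊆ A → S.Nonempty → S.ncard + 1 < A.ncard →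
        S.ncard + 2 ≤ Set.ncard {v : V | ∃ x ∈ S, H.Adj x v})) ∧
    ((∀ S : Set V, S ⊆ A → S.Nonempty → S.ncard + 1 < A.ncard →
        S.ncard + 2 ≤ Set.ncard {v : V | ∃ x ∈ S, H.Adj x v}) ↔
      (∀ a1 a2 b1 b2 : V, a1 ∈ A → a2 ∈ A → b1 ∈ B → b2 ∈ B →
        a1 ≠ a2 → b1 ≠ b2 →
        HasPerfMatching (H.induce (({a1, a2, b1, b2} : Set V)ᶜ)))) := by
  have hA3 : 3 ≤ A.ncard := by
    have h1 : A.ncard + B.ncard = Nat.card V := by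
      rw [← Set.ncard_union_eq hbip.2.1 (Set.toFinite _) (Set.toFinite _), hbip.1,
        Set.ncard_univ]
    omega
  refine ⟨⟨fun hbr => brace_imp_cond2 hbip hAB hA3 hbr,
    fun h2 => cond2_imp_brace hbip hAB h2 hA3 hcard⟩, ?_, ?_⟩
  · intro h2 a1 a2 b1 b2 ha1 ha2 hb1 hb2 ha hb
    exact cond2_imp_cond3 hbip hAB h2 hA3 ha1 ha2 hb1 hb2 ha hb
  · intro h3
    exact cond3_imp_cond2 hbip hAB hA3 h3
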